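/- For every prime p > 3, (p-1)! ≡ p·B_{p-1} - p (mod p^2), where the congruence is interpreted in the ring of p-adic integers (p·B_{p-1} is a p-adic integer by von Staudt–Clausen). -/

import Mathlib

open Finset

lemma padicNorm_pow (p : ℕ) [Fact p.Prime] (q : ℚ) (n : ℕ) : padicNorm p (q ^ n) = padicNorm p q ^ n := by
  induction n with
  | zero => simp [padicNorm.one]
  | succ n ih => rw [pow_succ, pow_succ, padicNorm.mul, ih]

-- norm of p^(t-1)/t is ≤ 1
lemma aux_div (p : ℕ) [hp : Fact p.Prime] (t : ℕ) (ht : t ≠ 0) :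
    padicNorm p ((p : ℚ) ^ (t - 1) / t) ≤ 1 := by
  have hp1 : 1 < p := hp.1.one_lt
  have hpQ : (1:ℚ) < p := by exact_mod_cast hp1
  set v := padicValNat p t with hv
  have hvle : v ≤ t - 1 := by
    have h1 : p ^ v ≤ t := Nat.le_of_dvd (Nat.pos_of_ne_zero ht) pow_padicValNat_dvd
    have h2 : t < 2 ^ t := Nat.lt_two_pow_self
    have h3 : p ^ v < p ^ t :=
      lt_of_le_of_lt h1 (lt_of_lt_of_le h2 (Nat.pow_le_pow_left (by omega) t))
    have := Nat.pow_lt_pow_iff_right hp1 |>.mp h3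
    omega
  have hnt : padicNorm p (t : ℚ) = (p : ℚ) ^ (-(v : ℤ)) := by
    rw [padicNorm.eq_zpow_of_nonzero (by exact_mod_cast ht)]
    congr 1
    rw [← padicValRat_of_nat]
  have hnp : padicNorm p ((p : ℚ) ^ (t - 1)) = (p : ℚ) ^ (-((t:ℤ) - 1)) := by
    rw [padicNorm_pow, padicNorm.padicNorm_p_of_prime, ← zpow_neg_one, ← zpow_natCast, ← zpow_mul]
    congr 1
    omega
  rw [padicNorm.div, hnt, hnp, ← zpow_sub₀ (by positivity)]
  calc (p:ℚ) ^ (-((t:ℤ)-1) - -(v:ℤ)) ≤ (p:ℚ) ^ (0:ℤ) := by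
        apply zpow_le_zpow_right₀ hpQ.le
        omega
    _ = 1 := zpow_zero _

lemma bern_norm (p : ℕ) [hp : Fact p.Prime] : ∀ m, padicNorm p ((p : ℚ) * bernoulli m) ≤ 1 := by
  intro m
  induction m using Nat.strong_induction_on with
  | _ m ih =>
  have hm1 : ((m : ℚ) + 1) ≠ 0 := by positivity
  -- Faulhaber with n := p
  have hF := sum_range_pow p m
  rw [Finset.sum_range_succ] at hF
  have hlast : bernoulli m * ((m + 1).choose m : ℚ) * (p:ℚ) ^ (m + 1 - m) / (m + 1)
      = (p : ℚ) * bernoulli m := by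
    rw [Nat.choose_succ_self_right, Nat.add_sub_cancel_left, pow_one]
    push_cast
    field_simp
  rw [hlast] at hF
  have key : (p : ℚ) * bernoulli m = (∑ k ∈ range p, (k : ℚ) ^ m)
      - ∑ i ∈ range m, bernoulli i * ((m + 1).choose i : ℚ) * (p:ℚ) ^ (m + 1 - i) / (m + 1) := by
    rw [hF]; ring
  rw [key]
  have h1 : padicNorm p (∑ k ∈ range p, (k : ℚ) ^ m) ≤ 1 := by
    have : (∑ k ∈ range p, (k : ℚ) ^ m) = ((∑ k ∈ range p, k ^ m : ℕ) : ℚ) := by push_cast; rfl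
    rw [this]; exact padicNorm.of_nat _
  have h2 : padicNorm p (∑ i ∈ range m,
      bernoulli i * ((m + 1).choose i : ℚ) * (p:ℚ) ^ (m + 1 - i) / (m + 1)) ≤ 1 := by
    apply padicNorm.sum_le' _ zero_le_one
    intro i hi
    rw [mem_range] at hi
    have hnat : (m + 1) * m.choose i = (m + 1).choose i * (m + 1 - i) := by
      have h1 := Nat.add_one_mul_choose_eq m (m - i)
      rw [Nat.choose_symm hi.le] at h1
      have h2 : (m + 1).choose ((m - i) + 1) = (m + 1).choose i := by
        rw [← Nat.choose_symm (by omega : m - i + 1 ≤ m + 1)]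
        congr 1
        omega
      rw [h2] at h1
      have h3 : m - i + 1 = m + 1 - i := by omega
      simpa [Nat.succ_eq_add_one, h3] using h1
    have hc : ((m + 1).choose i : ℚ) * ((m + 1 - i : ℕ) : ℚ) = ((m:ℚ) + 1) * (m.choose i : ℚ) := by
      exact_mod_cast hnat.symm
    have hne : ((m + 1 - i : ℕ) : ℚ) ≠ 0 := by
      have : 0 < m + 1 - i := by omega
      positivity
    have hterm : bernoulli i * ((m + 1).choose i : ℚ) * (p:ℚ) ^ (m + 1 - i) / (m + 1)
        = ((p:ℚ) * bernoulli i) * (m.choose i : ℚ) *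
            ((p:ℚ) ^ ((m + 1 - i) - 1) / ((m + 1 - i : ℕ) : ℚ)) := by
      have hpow : (p:ℚ) ^ (m + 1 - i) = (p:ℚ) * (p:ℚ) ^ ((m + 1 - i) - 1) := by
        rw [← pow_succ']
        congr 1
        omega
      rw [hpow]
      field_simp
      linear_combination (bernoulli i * (p:ℚ) * (p:ℚ) ^ (m + 1 - i - 1)) * hc
    rw [hterm, padicNorm.mul, padicNorm.mul]
    have b1 := ih i hi
    have b2 := padicNorm.of_nat (p := p) (m.choose i)
    have b3 := aux_div p (m + 1 - i) (by omega)
    have n2 := padicNorm.nonneg (p := p) ((m.choose i : ℚ))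
    have n3 := padicNorm.nonneg (p := p) ((p:ℚ) ^ ((m + 1 - i) - 1) / ((m + 1 - i : ℕ) : ℚ))
    exact mul_le_one₀ (mul_le_one₀ b1 n2 b2) n3 b3
  calc padicNorm p ((∑ k ∈ range p, (k : ℚ) ^ m) - _) ≤ _ := padicNorm.sub
    _ ≤ 1 := max_le h1 h2

lemma padicNorm_p_pow (p : ℕ) [hp : Fact p.Prime] (n : ℕ) :
    padicNorm p ((p : ℚ) ^ n) = (p : ℚ) ^ (-(n : ℤ)) := by
  rw [padicNorm_pow, padicNorm.padicNorm_p_of_prime, inv_pow, ← zpow_natCast, ← zpow_neg]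

lemma partB (p : ℕ) [hp : Fact p.Prime] (h3 : 3 < p) :
    padicNorm p ((∑ k ∈ range p, (k : ℚ) ^ (p - 1)) - (p : ℚ) * bernoulli (p - 1))
      ≤ (p : ℚ) ^ (-2 : ℤ) := by
  have hp1 : (1:ℚ) ≤ p := by exact_mod_cast hp.1.one_lt.le
  have hp0 : (p:ℚ) ≠ 0 := by positivity
  have hpodd : Odd p := hp.1.odd_of_ne_two (by omega)
  have hsucc : p - 1 + 1 = p := by omega
  have hF := sum_range_pow p (p - 1)
  rw [hsucc] at hF
  have hcQ : ((p - 1 : ℕ) : ℚ) + 1 = (p : ℚ) := by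
    push_cast [Nat.cast_sub (by omega : 1 ≤ p)]
    ring
  rw [hcQ] at hF
  have hchoose : p.choose (p - 1) = p := by
    have := Nat.choose_symm (by omega : 1 ≤ p)
    rw [Nat.choose_one_right] at this
    simpa using this
  have hsplit : (∑ i ∈ range p, bernoulli i * (p.choose i : ℚ) * (p:ℚ) ^ (p - i) / (p:ℚ))
      = (∑ i ∈ range (p-1), bernoulli i * (p.choose i : ℚ) * (p:ℚ) ^ (p - i) / (p:ℚ))
        + bernoulli (p-1) * (p.choose (p-1) : ℚ) * (p:ℚ) ^ (p - (p-1)) / (p:ℚ) := by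
    rw [← Finset.sum_range_succ (fun i => bernoulli i * (p.choose i : ℚ) * (p:ℚ) ^ (p - i) / (p:ℚ)) (p-1), hsucc]
  have hlast : bernoulli (p-1) * (p.choose (p-1) : ℚ) * (p:ℚ) ^ (p - (p-1)) / (p:ℚ)
      = (p:ℚ) * bernoulli (p-1) := by
    rw [hchoose, show p - (p-1) = 1 by omega, pow_one]
    field_simp
  rw [hsplit, hlast] at hF
  have key : (∑ k ∈ range p, (k : ℚ) ^ (p-1)) - (p:ℚ) * bernoulli (p-1)
      = ∑ i ∈ range (p-1), bernoulli i * (p.choose i : ℚ) * (p:ℚ) ^ (p - i) / (p:ℚ) := by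
    rw [hF]; ring
  rw [key]
  apply padicNorm.sum_le' _ (by positivity)
  intro i hi
  rw [mem_range] at hi
  by_cases h0 : i = 0
  · subst h0
    have : bernoulli 0 * (p.choose 0 : ℚ) * (p:ℚ) ^ (p - 0) / (p:ℚ) = (p:ℚ) ^ (p - 1) := by
      rw [bernoulli_zero, Nat.choose_zero_right, Nat.cast_one]
      rw [show p - 0 = (p-1) + 1 by omega, pow_succ]
      field_simp
    rw [this, padicNorm_p_pow]
    apply zpow_le_zpow_right₀ hp1
    omega
  · by_cases hodd : Odd i ∧ 1 < i
    · have hb0 : bernoulli i = 0 := by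
        rw [bernoulli_eq_bernoulli'_of_ne_one (by omega)]
        exact bernoulli'_eq_zero_of_odd hodd.1 hodd.2
      simp only [hb0, zero_mul, zero_div, padicNorm.zero]
      positivity
    · -- i = 1 or i even, 1 ≤ i < p-1; then p - i ≥ 3
      have hieven : i = 1 ∨ Even i := by
        rcases Nat.even_or_odd i with h | h
        · right; exact h
        · left
          by_contra hne
          exact hodd ⟨h, by omega⟩
      have hi3 : i + 3 ≤ p := by
        rcases hieven with h | h
        · omega
        · obtain ⟨a, ha⟩ := h
          obtain ⟨b, hb⟩ := hpodd
          omega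
      obtain ⟨c, hc⟩ := hp.1.dvd_choose_self h0 (by omega : i < p)
      have hterm : bernoulli i * (p.choose i : ℚ) * (p:ℚ) ^ (p - i) / (p:ℚ)
          = ((p:ℚ) * bernoulli i) * (c : ℚ) * (p:ℚ) ^ (p - i - 1) := by
        rw [hc]
        push_cast
        rw [show p - i = (p - i - 1) + 1 by omega, pow_succ]
        field_simp
        ring_nf
        rw [show 1 + (p - i - 1) - 1 = p - i - 1 by omega]
      rw [hterm, padicNorm.mul, padicNorm.mul, padicNorm_p_pow]
      have b1 := bern_norm p i
      have b2 := padicNorm.of_nat (p := p) c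
      have n2 := padicNorm.nonneg (p := p) ((c : ℚ))
      have hexp : (p:ℚ) ^ (-((p - i - 1 : ℕ) : ℤ)) ≤ (p:ℚ) ^ (-2 : ℤ) := by
        apply zpow_le_zpow_right₀ hp1
        omega
      calc padicNorm p ((p:ℚ) * bernoulli i) * padicNorm p (c:ℚ) * (p:ℚ) ^ (-((p-i-1:ℕ):ℤ))
          ≤ 1 * (p:ℚ) ^ (-((p-i-1:ℕ):ℤ)) := by
            apply mul_le_mul_of_nonneg_right (mul_le_one₀ b1 n2 b2) (by positivity)
        _ ≤ (p:ℚ) ^ (-2:ℤ) := by rw [one_mul]; exact hexp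

lemma prod_one_add (N : ℤ) (f : ℕ → ℤ) (s : Finset ℕ) :
    ∏ k ∈ s, (1 + N * f k) ≡ 1 + N * ∑ k ∈ s, f k [ZMOD N^2] := by
  classical
  induction s using Finset.induction_on with
  | empty => simp
  | insert a s ha ih =>
    rw [Finset.prod_insert ha, Finset.sum_insert ha]
    calc (1 + N * f a) * ∏ k ∈ s, (1 + N * f k)
        ≡ (1 + N * f a) * (1 + N * ∑ k ∈ s, f k) [ZMOD N^2] := ih.mul_left _
      _ ≡ 1 + N * (f a + ∑ k ∈ s, f k) [ZMOD N^2] :=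
        Int.modEq_iff_dvd.mpr ⟨-(f a * ∑ k ∈ s, f k), by ring⟩

lemma pow_one_add (N x : ℤ) (n : ℕ) :
    (1 + N * x) ^ n ≡ 1 + n * N * x [ZMOD N^2] := by
  induction n with
  | zero => simp
  | succ n ih =>
    calc (1 + N * x) ^ (n+1) = (1 + N * x)^n * (1 + N * x) := by ring
      _ ≡ (1 + n * N * x) * (1 + N * x) [ZMOD N^2] := ih.mul_right _
      _ ≡ 1 + (n+1 : ℕ) * N * x [ZMOD N^2] :=
        Int.modEq_iff_dvd.mpr ⟨-(n * x * x), by push_cast; ring⟩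

lemma partA (p : ℕ) [hp : Fact p.Prime] (h3 : 3 < p) :
    ((p-1).factorial : ℤ) ≡ (∑ k ∈ range p, (k:ℤ)^(p-1)) - p [ZMOD (p:ℤ)^2] := by
  have hp0 : 0 < p := by omega
  -- Fermat witnesses
  have hferm : ∀ k ∈ Finset.Ico 1 p, (p:ℤ) ∣ (k:ℤ)^(p-1) - 1 := by
    intro k hk
    rw [Finset.mem_Ico] at hk
    have hk0 : (k : ZMod p) ≠ 0 := by
      rw [Ne, ZMod.natCast_eq_zero_iff]
      intro hdvd
      have := Nat.le_of_dvd (by omega) hdvd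
      omega
    have := ZMod.pow_card_sub_one_eq_one hk0
    have hcast : (((k:ℤ)^(p-1) - 1 : ℤ) : ZMod p) = 0 := by
      push_cast
      rw [this]
      ring
    exact (ZMod.intCast_zmod_eq_zero_iff_dvd _ _).mp hcast
  set a : ℕ → ℤ := fun k => ((k:ℤ)^(p-1) - 1) / p with ha
  have hak : ∀ k ∈ Finset.Ico 1 p, (k:ℤ)^(p-1) = 1 + p * a k := by
    intro k hk
    have := Int.mul_ediv_cancel' (hferm k hk)
    simp only [ha]
    omega
  set A : ℤ := ∑ k ∈ Finset.Ico 1 p, a k with hA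
  -- Wilson witness
  have hwil : (p:ℤ) ∣ ((p-1).factorial : ℤ) + 1 := by
    have h := ZMod.wilsons_lemma (p := p)
    have : ((((p-1).factorial : ℤ) + 1 : ℤ) : ZMod p) = 0 := by
      push_cast
      rw [h]
      ring
    exact (ZMod.intCast_zmod_eq_zero_iff_dvd _ _).mp this
  obtain ⟨w, hw⟩ := hwil
  have hfac : ((p-1).factorial : ℤ) = -1 + p * w := by omega
  -- factorial as product
  have hprod : (∏ k ∈ Finset.Ico 1 p, (k:ℤ)) = ((p-1).factorial : ℤ) := by
    have := Finset.prod_Ico_id_eq_factorial (p-1)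
    rw [show p - 1 + 1 = p by omega] at this
    calc (∏ k ∈ Finset.Ico 1 p, (k:ℤ)) = ((∏ k ∈ Finset.Ico 1 p, k : ℕ) : ℤ) := by
          push_cast; rfl
      _ = _ := by rw [this]
  -- left side: factorial^(p-1) ≡ 1 + p*A
  have hL1 : ((p-1).factorial : ℤ)^(p-1) ≡ 1 + p * A [ZMOD (p:ℤ)^2] := by
    calc ((p-1).factorial : ℤ)^(p-1) = ∏ k ∈ Finset.Ico 1 p, (k:ℤ)^(p-1) := by
          rw [← hprod, ← Finset.prod_pow]
      _ = ∏ k ∈ Finset.Ico 1 p, (1 + (p:ℤ) * a k) := Finset.prod_congr rfl hak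
      _ ≡ 1 + p * A [ZMOD (p:ℤ)^2] := prod_one_add _ _ _
  -- left side: factorial^(p-1) ≡ 1 + p*w
  have heven : Even (p - 1) := by
    obtain ⟨b, hb⟩ := hp.1.odd_of_ne_two (by omega)
    exact ⟨b, by omega⟩
  have hL2 : ((p-1).factorial : ℤ)^(p-1) ≡ 1 + p * w [ZMOD (p:ℤ)^2] := by
    calc ((p-1).factorial : ℤ)^(p-1) = (1 + (p:ℤ) * (-w))^(p-1) := by
          rw [hfac, show (-1 : ℤ) + p * w = -(1 + p * (-w)) by ring, heven.neg_pow]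
      _ ≡ 1 + (p-1 : ℕ) * p * (-w) [ZMOD (p:ℤ)^2] := pow_one_add _ _ _
      _ ≡ 1 + p * w [ZMOD (p:ℤ)^2] := by
          apply Int.modEq_iff_dvd.mpr
          refine ⟨w, ?_⟩
          push_cast [Nat.cast_sub (by omega : 1 ≤ p)]
          ring
  have hAw : (p:ℤ) * A ≡ (p:ℤ) * w [ZMOD (p:ℤ)^2] := by
    exact Int.ModEq.add_left_cancel' 1 (hL1.symm.trans hL2)
  -- the sum
  have hS : (∑ k ∈ range p, (k:ℤ)^(p-1)) = (p - 1 : ℤ) + p * A := by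
    rw [Finset.range_eq_Ico, Finset.sum_eq_sum_Ico_succ_bot hp0]
    rw [show ((0:ℕ):ℤ)^(p-1) = 0 by exact zero_pow (by omega), zero_add, Nat.zero_add]
    rw [Finset.sum_congr rfl hak, Finset.sum_add_distrib, ← Finset.mul_sum, ← hA]
    simp [Nat.card_Ico]
    push_cast [Nat.cast_sub (by omega : 1 ≤ p)]
    ring
  rw [hS, hfac]
  have : ((p:ℤ) - 1 + p * A - p) - (-1 + p * w) = (p * A - p * w) := by ring
  apply Int.modEq_iff_dvd.mpr
  rw [show ((p:ℤ) - 1 + p * A - p) - (-1 + p * w) = -((p*w) - p*A) by ring]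
  exact dvd_neg.mpr hAw.dvd

/-- Glaisher: for a prime `p > 3`, `(p-1)! ≡ p·B_{p-1} - p (mod p²)` in `ℤ_p`. -/
theorem glaisher_wilson (p : ℕ) [hp : Fact p.Prime] (h3 : 3 < p) :
    ∃ z : ℤ_[p],
      (Nat.factorial (p - 1) : ℚ_[p]) -
        ((p : ℚ_[p]) * ((bernoulli (p - 1) : ℚ) : ℚ_[p]) - (p : ℚ_[p]))
      = (p : ℚ_[p]) ^ 2 * (z : ℚ_[p]) := by
  set X : ℚ_[p] := (Nat.factorial (p - 1) : ℚ_[p]) -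
      ((p : ℚ_[p]) * ((bernoulli (p - 1) : ℚ) : ℚ_[p]) - (p : ℚ_[p])) with hX
  set D : ℤ := ((p-1).factorial : ℤ) - ((∑ k ∈ range p, (k:ℤ)^(p-1)) - p) with hD
  have hdvd : ((p:ℤ)^2) ∣ D := by
    have h := (partA p h3).symm
    rw [Int.modEq_iff_dvd] at h
    simpa [hD] using h
  have hXsplit : X = (D : ℚ_[p]) +
      (((∑ k ∈ range p, (k : ℚ) ^ (p - 1)) - (p : ℚ) * bernoulli (p - 1) : ℚ) : ℚ_[p]) := by
    rw [hX, hD]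
    push_cast
    ring
  have hn1 : ‖(D : ℚ_[p])‖ ≤ (p : ℝ) ^ (-2 : ℤ) := by
    have := (Padic.norm_int_le_pow_iff_dvd (p := p) D 2).mpr hdvd
    simpa using this
  have hn2 : ‖(((∑ k ∈ range p, (k : ℚ) ^ (p - 1)) - (p : ℚ) * bernoulli (p - 1) : ℚ) : ℚ_[p])‖
      ≤ (p : ℝ) ^ (-2 : ℤ) := by
    rw [Padic.eq_padicNorm]
    have := partB p h3
    have hcast : ((padicNorm p ((∑ k ∈ range p, (k : ℚ) ^ (p - 1)) - (p : ℚ) * bernoulli (p - 1)) : ℚ) : ℝ)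
        ≤ (((p : ℚ) ^ (-2 : ℤ) : ℚ) : ℝ) := by exact_mod_cast this
    simpa [Rat.cast_zpow] using hcast
  have hnX : ‖X‖ ≤ (p : ℝ) ^ (-2 : ℤ) := by
    rw [hXsplit]
    exact le_trans (Padic.nonarchimedean _ _) (max_le hn1 hn2)
  have hp0 : ((p : ℚ_[p])) ≠ 0 := by
    exact_mod_cast Nat.cast_ne_zero.mpr hp.1.ne_zero
  have hnormp2 : ‖((p : ℚ_[p]))^2‖ = (p : ℝ) ^ (-2 : ℤ) := by
    rw [norm_pow, Padic.norm_p]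
    rw [show ((p:ℝ)⁻¹)^2 = ((p:ℝ)^(2:ℕ))⁻¹ by rw [inv_pow]]
    rw [← zpow_natCast, ← zpow_neg]
    norm_num
  have hz : ‖X / ((p : ℚ_[p]))^2‖ ≤ 1 := by
    rw [norm_div, hnormp2]
    rw [div_le_one (by positivity)]
    simpa using hnX
  refine ⟨⟨X / ((p : ℚ_[p]))^2, hz⟩, ?_⟩
  show X = (p : ℚ_[p])^2 * (X / ((p : ℚ_[p]))^2)
  field_simp
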